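/- Fix κ ∈ ℝ, t > 0, α ∈ (0,2], β ∈ (0,1]. Suppose φ_X is a characteristic function satisfying φ_X(hκ) = 1 − h^α|κ|^α + o(h^α) as h → 0⁺. If h, r → 0⁺ with h^α/r^β → 1, then E_β((t^β/r^β)(φ_X(hκ) − 1)) → E_β(−t^β|κ|^α). -/

import Mathlib

open Filter Real

private lemma gamma_mul_rpow_le (β : ℝ) (hβ0 : 0 < β) (hβ1 : β ≤ 1) (x : ℝ) (hx : 1 ≤ x) :
    Real.Gamma x * (x + β - 1) ^ β ≤ Real.Gamma (x + β) := by
  have hx0 : 0 < x := lt_of_lt_of_le one_pos hx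
  have hxb1 : 0 < x + β - 1 := by linarith
  rcases eq_or_lt_of_le hβ1 with hb | hb
  · subst hb
    rw [Real.rpow_one, show x + 1 - 1 = x from by ring,
      Real.Gamma_add_one (ne_of_gt hx0)]
    exact le_of_eq (mul_comm _ _)
  · -- use log-convexity
    have key := Real.Gamma_mul_add_mul_le_rpow_Gamma_mul_rpow_Gamma
      (s := x + β - 1) (t := x + β) (a := β) (b := 1 - β)
      hxb1 (by linarith) hβ0 (by linarith) (by ring)
    have hxeq : β * (x + β - 1) + (1 - β) * (x + β) = x := by ring
    rw [hxeq] at key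
    have hG : Real.Gamma (x + β - 1) = Real.Gamma (x + β) / (x + β - 1) := by
      have := Real.Gamma_add_one (ne_of_gt hxb1)
      have h2 : x + β - 1 + 1 = x + β := by ring
      rw [h2] at this
      field_simp [this]
      exact this.symm
    rw [hG] at key
    have hGpos : 0 < Real.Gamma (x + β) := Real.Gamma_pos_of_pos (by linarith)
    have hrw : (Real.Gamma (x + β) / (x + β - 1)) ^ β * Real.Gamma (x + β) ^ (1 - β)
        = Real.Gamma (x + β) / (x + β - 1) ^ β := by
      rw [Real.div_rpow (le_of_lt hGpos) (le_of_lt hxb1), div_mul_eq_mul_div,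
        ← Real.rpow_add hGpos]
      norm_num
    rw [hrw] at key
    have hpow : 0 < (x + β - 1) ^ β := Real.rpow_pos_of_pos hxb1 _
    calc Real.Gamma x * (x + β - 1) ^ β
        ≤ (Real.Gamma (x + β) / (x + β - 1) ^ β) * (x + β - 1) ^ β :=
          mul_le_mul_of_nonneg_right key (le_of_lt hpow)
      _ = Real.Gamma (x + β) := by field_simp

private lemma summable_ml (β : ℝ) (hβ0 : 0 < β) (hβ1 : β ≤ 1) (C : ℝ) (hC : 0 ≤ C) :
    Summable (fun k : ℕ => C ^ k / Real.Gamma (β * k + 1)) := by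
  apply summable_of_ratio_norm_eventually_le (r := 1/2) (by norm_num)
  have htend : Tendsto (fun k : ℕ => (β * k + β) ^ β) atTop atTop := by
    apply (tendsto_rpow_atTop hβ0).comp
    apply tendsto_atTop_add_const_right
    exact (tendsto_natCast_atTop_atTop (R := ℝ)).const_mul_atTop hβ0
  filter_upwards [htend.eventually_ge_atTop (2 * C + 1)] with k hk
  have hk1 : (0:ℝ) ≤ k := Nat.cast_nonneg k
  have hbk1 : (0:ℝ) < β * k + 1 := by positivity
  have hG1 : 0 < Real.Gamma (β * k + 1) := Real.Gamma_pos_of_pos hbk1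
  have hG2 : 0 < Real.Gamma (β * k + 1 + β) := Real.Gamma_pos_of_pos (by linarith)
  have hk0 : (0:ℝ) ≤ β * k := by positivity
  have hkey := gamma_mul_rpow_le β hβ0 hβ1 (β * k + 1) (by linarith)
  have hsimp : β * k + 1 + β - 1 = β * k + β := by ring
  rw [hsimp] at hkey
  have hpow : (0:ℝ) < (β * k + β) ^ β := by
    apply Real.rpow_pos_of_pos; positivity
  have hnext : β * (k + 1 : ℕ) + 1 = β * k + 1 + β := by push_cast; ring
  rw [Real.norm_eq_abs, Real.norm_eq_abs, abs_of_nonneg (by positivity),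
    abs_of_nonneg (by positivity), hnext]
  have step1 : C ^ (k+1) / Real.Gamma (β * k + 1 + β)
      ≤ C ^ (k+1) / (Real.Gamma (β * k + 1) * (β * k + β) ^ β) :=
    div_le_div_of_nonneg_left (by positivity) (by positivity) hkey
  have step2 : C ^ (k+1) / (Real.Gamma (β * k + 1) * (β * k + β) ^ β)
      = (C / (β * k + β) ^ β) * (C ^ k / Real.Gamma (β * k + 1)) := by
    rw [pow_succ]; field_simp
  have step3 : C / (β * k + β) ^ β ≤ 1 / 2 := by
    rw [div_le_div_iff₀ hpow (by norm_num)]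
    linarith
  calc C ^ (k+1) / Real.Gamma (β * k + 1 + β)
      ≤ (C / (β * k + β) ^ β) * (C ^ k / Real.Gamma (β * k + 1)) := by rw [← step2]; exact step1
    _ ≤ (1/2) * (C ^ k / Real.Gamma (β * k + 1)) :=
        mul_le_mul_of_nonneg_right step3 (by positivity)
    _ = 1/2 * (C ^ k / Real.Gamma (β * k + 1)) := by ring

/-- Convergence of the rescaled characteristic function of the compound
fractional Poisson process to the Mittag-Leffler characteristic function of the
fractional diffusion: if `φ_X(hκ) = 1 - h^α|κ|^α + o(h^α)` as `h → 0⁺` and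
`h, r → 0⁺` with `h^α/r^β → 1`, then
`E_β((t/r)^β(φ_X(hκ)-1)) → E_β(-t^β|κ|^α)`. -/
theorem compound_fractional_poisson_scaling_limit
    (α β : ℝ) (hα0 : 0 < α) (hα2 : α ≤ 2) (hβ0 : 0 < β) (hβ1 : β ≤ 1)
    (κ t : ℝ) (ht : 0 < t) (φX : ℝ → ℂ)
    (hexp : (fun h : ℝ => φX (h * κ) - (1 - ((h ^ α * |κ| ^ α : ℝ) : ℂ)))
      =o[nhdsWithin 0 (Set.Ioi 0)] fun h : ℝ => h ^ α)
    (h r : ℕ → ℝ) (hh : ∀ n, 0 < h n) (hr : ∀ n, 0 < r n)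
    (hh0 : Tendsto h atTop (nhds 0)) (hr0 : Tendsto r atTop (nhds 0))
    (hratio : Tendsto (fun n => h n ^ α / r n ^ β) atTop (nhds 1)) :
    Tendsto
      (fun n => ∑' k : ℕ,
        (((t ^ β / r n ^ β : ℝ) : ℂ) * (φX (h n * κ) - 1)) ^ k / Complex.Gamma (β * k + 1))
      atTop
      (nhds (∑' k : ℕ, ((-(t ^ β * |κ| ^ α) : ℝ) : ℂ) ^ k / Complex.Gamma (β * k + 1))) := by
  set zn : ℕ → ℂ := fun n => ((t ^ β / r n ^ β : ℝ) : ℂ) * (φX (h n * κ) - 1) with hzn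
  set zl : ℂ := ((-(t ^ β * |κ| ^ α) : ℝ) : ℂ) with hzl
  -- error term
  set e : ℕ → ℂ := fun n => φX (h n * κ) - (1 - ((h n ^ α * |κ| ^ α : ℝ) : ℂ)) with he
  have hhtend : Tendsto h atTop (nhdsWithin 0 (Set.Ioi 0)) :=
    tendsto_nhdsWithin_of_tendsto_nhds_of_eventually_within h hh0
      (Eventually.of_forall fun n => hh n)
  have heo : (fun n => e n) =o[atTop] fun n => h n ^ α := hexp.comp_tendsto hhtend
  have heno : (fun n => ‖e n‖) =o[atTop] fun n => h n ^ α := heo.norm_left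
  have hediv : Tendsto (fun n => ‖e n‖ / h n ^ α) atTop (nhds 0) :=
    heno.tendsto_div_nhds_zero
  -- ‖e n‖ / r n ^ β → 0
  have herdiv : Tendsto (fun n => ‖e n‖ / r n ^ β) atTop (nhds 0) := by
    have : (fun n => ‖e n‖ / r n ^ β)
        = fun n => (‖e n‖ / h n ^ α) * (h n ^ α / r n ^ β) := by
      funext n
      have h1 : h n ^ α ≠ 0 := ne_of_gt (Real.rpow_pos_of_pos (hh n) _)
      field_simp
    rw [this]
    have := hediv.mul hratio
    simpa using this
  -- main limit of zn
  have hz : Tendsto zn atTop (nhds zl) := by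
    have hdecomp : ∀ n, zn n = ((t ^ β : ℝ) : ℂ) * (e n / ((r n ^ β : ℝ) : ℂ))
        - ((t ^ β * (h n ^ α / r n ^ β) * |κ| ^ α : ℝ) : ℂ) := by
      intro n
      have hrβ : (r n : ℝ) ^ β ≠ 0 := ne_of_gt (Real.rpow_pos_of_pos (hr n) _)
      have hrβc : ((r n ^ β : ℝ) : ℂ) ≠ 0 := by
        exact_mod_cast hrβ
      rw [hzn, he]
      push_cast
      field_simp
      ring
    have h1 : Tendsto (fun n => ((t ^ β : ℝ) : ℂ) * (e n / ((r n ^ β : ℝ) : ℂ)))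
        atTop (nhds 0) := by
      rw [show (0:ℂ) = ((t ^ β : ℝ) : ℂ) * 0 by ring]
      apply Tendsto.const_mul
      rw [tendsto_zero_iff_norm_tendsto_zero]
      have heq : (fun n => ‖e n / ((r n ^ β : ℝ) : ℂ)‖) = fun n => ‖e n‖ / r n ^ β := by
        funext n
        rw [norm_div, Complex.norm_real, Real.norm_eq_abs,
          abs_of_pos (Real.rpow_pos_of_pos (hr n) _)]
      rw [heq]
      exact herdiv
    have h2 : Tendsto (fun n => ((t ^ β * (h n ^ α / r n ^ β) * |κ| ^ α : ℝ) : ℂ))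
        atTop (nhds ((t ^ β * 1 * |κ| ^ α : ℝ) : ℂ)) := by
      apply Tendsto.comp (Complex.continuous_ofReal.tendsto _)
      exact (hratio.const_mul _).mul_const _
    have := h1.sub h2
    rw [show (0 : ℂ) - ((t ^ β * 1 * |κ| ^ α : ℝ) : ℂ) = zl by rw [hzl]; push_cast; ring] at this
    apply this.congr
    intro n
    exact (hdecomp n).symm
  -- bound on ‖zn‖
  obtain ⟨C, hCmem⟩ : BddAbove (Set.range fun n => ‖zn n‖) :=
    (hz.norm).bddAbove_range
  have hCb : ∀ n, ‖zn n‖ ≤ C := fun n => hCmem (Set.mem_range_self n)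
  have hC0 : 0 ≤ C := le_trans (norm_nonneg _) (hCb 0)
  -- gamma norm computation
  have hGam : ∀ k : ℕ, Complex.Gamma ((β : ℂ) * k + 1) = ((Real.Gamma (β * k + 1) : ℝ) : ℂ) := by
    intro k
    rw [show ((β : ℂ) * k + 1) = ((β * k + 1 : ℝ) : ℂ) by push_cast; ring,
      Complex.Gamma_ofReal]
  have hGpos : ∀ k : ℕ, 0 < Real.Gamma (β * k + 1) := by
    intro k
    apply Real.Gamma_pos_of_pos
    have : (0:ℝ) ≤ k := Nat.cast_nonneg k
    nlinarith
  -- apply dominated convergence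
  apply tendsto_tsum_of_dominated_convergence
    (bound := fun k : ℕ => C ^ k / Real.Gamma (β * k + 1))
    (summable_ml β hβ0 hβ1 C hC0)
  · intro k
    exact (hz.pow k).div_const _
  · apply Eventually.of_forall
    intro n k
    rw [norm_div, hGam k, Complex.norm_real, Real.norm_eq_abs, abs_of_pos (hGpos k),
      norm_pow]
    exact div_le_div_of_nonneg_right (pow_le_pow_left₀ (norm_nonneg (zn n)) (hCb n) k) (hGpos k).le
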